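/- arXiv:alg-geom/9408007 — 2 statements merged into one kernel-verified Lean document; each statement's English description precedes it below -/
import Mathlib

section
/- (Oort–Peters conic–cubic intersections.) (a) The set of common zeros of Q1 and C1 in ℙ²(ℂ) is exactly {P1, P2, P3}, and at each of these points the gradient vectors of Q1 and C1 are both nonzero and proportional (Q1·C1 = 2(P1+P2+P3)). (b) The set of common zeros of Q1 and C2 is exactly {P, P2, P3}; at P2 and P3 the gradients of Q1 and C2 are both nonzero and proportional, while at P the gradient of C2 vanishes, i.e. ∇C2(3,0,2) = 0 (so C2 has a singular point at P), giving Q1·C2 = 2(P+P2+P3). (c) The set of common zeros of Q2 and C1 is exactly {P1, P4, P5}, with nonzero proportional gradients at each point (Q2·C1 = 2(P1+P4+P5)). (d) The set of common zeros of Q2 and C2 is exactly {P, P4, P5}; at P4 and P5 the gradients of Q2 and C2 are both nonzero and proportional, and at P the gradient of C2 vanishes (Q2·C2 = 2(P4+P5+P)). -/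
noncomputable section

open MvPolynomial

/-- The polynomial ring `ℂ[x,y,z]`. -/
abbrev R3 : Type := MvPolynomial (Fin 3) ℂ

def x : R3 := X 0
def y : R3 := X 1
def z : R3 := X 2

/-- The Oort–Peters conic `Q1 = y² + 2x² − 2xy − 5xz + 2yz + 3z²`. -/
def Q1 : R3 := y^2 + 2*x^2 - 2*x*y - 5*x*z + 2*y*z + 3*z^2
/-- The Oort–Peters conic `Q2 = y² + 2x² + 2xy − 5xz − 2yz + 3z²`. -/
def Q2 : R3 := y^2 + 2*x^2 + 2*x*y - 5*x*z - 2*y*z + 3*z^2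
/-- The Oort–Peters cubic `C1 = y²z + x³ − 4x²z + 3xz²`. -/
def C1 : R3 := y^2*z + x^3 - 4*x^2*z + 3*x*z^2
/-- The Oort–Peters cubic `C2 = 2y²z − xy² + 4x²z − 12xz² + 9z³`. -/
def C2 : R3 := 2*y^2*z - x*y^2 + 4*x^2*z - 12*x*z^2 + 9*z^3

/-- `i√3`. -/
def s3 : ℂ := Complex.I * Real.sqrt 3

/-- Coordinate representative of `P = [3:0:2]` (i.e. `[3/2:0:1]`). -/
def P : Fin 3 → ℂ := ![3, 0, 2]
/-- Coordinate representative of `P1 = [1:0:1]`. -/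
def P1 : Fin 3 → ℂ := ![1, 0, 1]
/-- Coordinate representative of `P2 = [3+i√3 : 3+i√3 : 2]`. -/
def P2 : Fin 3 → ℂ := ![3+s3, 3+s3, 2]
/-- Coordinate representative of `P3 = [3−i√3 : 3−i√3 : 2]`. -/
def P3 : Fin 3 → ℂ := ![3-s3, 3-s3, 2]
/-- Coordinate representative of `P4 = [3+i√3 : −3−i√3 : 2]`. -/
def P4 : Fin 3 → ℂ := ![3+s3, -3-s3, 2]
/-- Coordinate representative of `P5 = [3−i√3 : −3+i√3 : 2]`. -/
def P5 : Fin 3 → ℂ := ![3-s3, -3+s3, 2]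
/-- Coordinate representative of `∞ = [0:1:0]`. -/
def Pinf : Fin 3 → ℂ := ![0, 1, 0]

/-- The gradient vector of `G` at the point `v ∈ ℂ³`. -/
def grad (G : R3) (v : Fin 3 → ℂ) : Fin 3 → ℂ := fun i => eval v (pderiv i G)

/-- The common zero locus of `G` and `H` in `ℙ²(ℂ)` is exactly the set of points with
coordinate representatives in the list `reps`. -/
def CommonZerosExactly (G H : R3) (reps : List (Fin 3 → ℂ)) : Prop :=
  (∀ w ∈ reps, eval w G = 0 ∧ eval w H = 0) ∧
  ∀ v : Fin 3 → ℂ, v ≠ 0 → eval v G = 0 → eval v H = 0 →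
    ∃ t : ℂ, t ≠ 0 ∧ ∃ w ∈ reps, v = t • w

/-- The curves `{G = 0}` and `{H = 0}` are tangent at the point with representative
`v`: both gradients are nonzero and they are proportional. -/
def TangentAt (G H : R3) (v : Fin 3 → ℂ) : Prop :=
  grad G v ≠ 0 ∧ grad H v ≠ 0 ∧ ∃ t : ℂ, t ≠ 0 ∧ grad H v = t • grad G v


-- ===== infrastructure =====
@[simp] lemma pd_ofNat (i : Fin 3) (n : ℕ) [n.AtLeastTwo] :
    pderiv i (no_index (OfNat.ofNat n) : R3) = 0 := by
  rw [← map_ofNat (C : ℂ →+* R3) n, pderiv_C]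

lemma hs3 : s3^2 = -3 := by
  have h : ((Real.sqrt 3 : ℝ) : ℂ)^2 = 3 := by
    rw [← Complex.ofReal_pow, Real.sq_sqrt (by norm_num)]; norm_num
  simp [s3, mul_pow, Complex.I_sq, h]

lemma vec3_ext {f g : Fin 3 → ℂ} (h0 : f 0 = g 0) (h1 : f 1 = g 1) (h2 : f 2 = g 2) :
    f = g := by
  funext i; fin_cases i <;> assumption

lemma ne_zero_of_comp {f : Fin 3 → ℂ} (i : Fin 3) (p q : ℂ) (h : f i = p + q*s3)
    (hpq : p^2 + 3*q^2 ≠ 0) : f ≠ 0 := by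
  intro h0
  rw [h0] at h
  simp only [Pi.zero_apply] at h
  exact hpq (by linear_combination (p - q*s3)*h.symm + q^2*hs3)

lemma lin_ne (p q : ℂ) (hpq : p^2 + 3*q^2 ≠ 0) : p + q*s3 ≠ 0 := by
  intro h
  exact hpq (by linear_combination (p - q*s3)*h + q^2*hs3)

lemma evalQ1 (v : Fin 3 → ℂ) : eval v Q1 =
    (v 1)^2 + 2*(v 0)^2 - 2*(v 0)*(v 1) - 5*(v 0)*(v 2) + 2*(v 1)*(v 2) + 3*(v 2)^2 := by
  simp [Q1, x, y, z]
lemma evalQ2 (v : Fin 3 → ℂ) : eval v Q2 =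
    (v 1)^2 + 2*(v 0)^2 + 2*(v 0)*(v 1) - 5*(v 0)*(v 2) - 2*(v 1)*(v 2) + 3*(v 2)^2 := by
  simp [Q2, x, y, z]
lemma evalC1 (v : Fin 3 → ℂ) : eval v C1 =
    (v 1)^2*(v 2) + (v 0)^3 - 4*(v 0)^2*(v 2) + 3*(v 0)*(v 2)^2 := by
  simp [C1, x, y, z]
lemma evalC2 (v : Fin 3 → ℂ) : eval v C2 =
    2*(v 1)^2*(v 2) - (v 0)*(v 1)^2 + 4*(v 0)^2*(v 2) - 12*(v 0)*(v 2)^2 + 9*(v 2)^3 := by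
  simp [C2, x, y, z]


lemma gradQ1_0 (v : Fin 3 → ℂ) : grad Q1 v 0 = 4*(v 0) - 2*(v 1) - 5*(v 2) := by
  simp [grad, Q1, x, y, z, pderiv_X]; ring

lemma gradQ1_1 (v : Fin 3 → ℂ) : grad Q1 v 1 = 2*(v 1) - 2*(v 0) + 2*(v 2) := by
  simp [grad, Q1, x, y, z, pderiv_X]; ring

lemma gradQ1_2 (v : Fin 3 → ℂ) : grad Q1 v 2 = -5*(v 0) + 2*(v 1) + 6*(v 2) := by
  simp [grad, Q1, x, y, z, pderiv_X]; ring

lemma gradQ2_0 (v : Fin 3 → ℂ) : grad Q2 v 0 = 4*(v 0) + 2*(v 1) - 5*(v 2) := by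
  simp [grad, Q2, x, y, z, pderiv_X]; ring

lemma gradQ2_1 (v : Fin 3 → ℂ) : grad Q2 v 1 = 2*(v 1) + 2*(v 0) - 2*(v 2) := by
  simp [grad, Q2, x, y, z, pderiv_X]; ring

lemma gradQ2_2 (v : Fin 3 → ℂ) : grad Q2 v 2 = -5*(v 0) - 2*(v 1) + 6*(v 2) := by
  simp [grad, Q2, x, y, z, pderiv_X]; ring

lemma gradC1_0 (v : Fin 3 → ℂ) : grad C1 v 0 = 3*(v 0)^2 - 8*(v 0)*(v 2) + 3*(v 2)^2 := by
  simp [grad, C1, x, y, z, pderiv_X]; ring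

lemma gradC1_1 (v : Fin 3 → ℂ) : grad C1 v 1 = 2*(v 1)*(v 2) := by
  simp [grad, C1, x, y, z, pderiv_X]; ring

lemma gradC1_2 (v : Fin 3 → ℂ) : grad C1 v 2 = (v 1)^2 - 4*(v 0)^2 + 6*(v 0)*(v 2) := by
  simp [grad, C1, x, y, z, pderiv_X]; ring

lemma gradC2_0 (v : Fin 3 → ℂ) : grad C2 v 0 = -(v 1)^2 + 8*(v 0)*(v 2) - 12*(v 2)^2 := by
  simp [grad, C2, x, y, z, pderiv_X]; ring

lemma gradC2_1 (v : Fin 3 → ℂ) : grad C2 v 1 = 4*(v 1)*(v 2) - 2*(v 0)*(v 1) := by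
  simp [grad, C2, x, y, z, pderiv_X]; ring

lemma gradC2_2 (v : Fin 3 → ℂ) : grad C2 v 2 = 2*(v 1)^2 + 4*(v 0)^2 - 24*(v 0)*(v 2) + 27*(v 2)^2 := by
  simp [grad, C2, x, y, z, pderiv_X]; ring

lemma P_0 : P (0 : Fin 3) = 3 := rfl

lemma P_1 : P (1 : Fin 3) = 0 := rfl

lemma P_2 : P (2 : Fin 3) = 2 := rfl

lemma P1_0 : P1 (0 : Fin 3) = 1 := rfl

lemma P1_1 : P1 (1 : Fin 3) = 0 := rfl

lemma P1_2 : P1 (2 : Fin 3) = 1 := rfl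

lemma P2_0 : P2 (0 : Fin 3) = 3+s3 := rfl

lemma P2_1 : P2 (1 : Fin 3) = 3+s3 := rfl

lemma P2_2 : P2 (2 : Fin 3) = 2 := rfl

lemma P3_0 : P3 (0 : Fin 3) = 3-s3 := rfl

lemma P3_1 : P3 (1 : Fin 3) = 3-s3 := rfl

lemma P3_2 : P3 (2 : Fin 3) = 2 := rfl

lemma P4_0 : P4 (0 : Fin 3) = 3+s3 := rfl

lemma P4_1 : P4 (1 : Fin 3) = -3-s3 := rfl

lemma P4_2 : P4 (2 : Fin 3) = 2 := rfl

lemma P5_0 : P5 (0 : Fin 3) = 3-s3 := rfl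

lemma P5_1 : P5 (1 : Fin 3) = -3+s3 := rfl

lemma P5_2 : P5 (2 : Fin 3) = 2 := rfl


lemma solveA (j a b c : ℂ) (hj : j^2 = -3)
    (h0 : ¬(a = 0 ∧ b = 0 ∧ c = 0))
    (hq : b^2 + 2*a^2 - 2*a*b - 5*a*c + 2*b*c + 3*c^2 = 0)
    (hc : b^2*c + a^3 - 4*a^2*c + 3*a*c^2 = 0) :
    c ≠ 0 ∧ ((a = c ∧ b = 0) ∨ (b = a ∧ 2*a = (3+j)*c) ∨ (b = a ∧ 2*a = (3-j)*c)) := by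
  have hc0 : c ≠ 0 := by
    intro h
    subst h
    have ha : a = 0 := pow_eq_zero_iff (three_ne_zero (α := ℕ)) |>.mp (by linear_combination hc)
    subst ha
    have hb : b = 0 := pow_eq_zero_iff (two_ne_zero (α := ℕ)) |>.mp (by linear_combination hq)
    exact h0 ⟨rfl, hb, rfl⟩
  refine ⟨hc0, ?_⟩
  have key : (a - c) * (2*b*c + a^2 - 5*a*c + 3*c^2) = 0 := by linear_combination hc - c*hq
  rcases mul_eq_zero.mp key with h1 | h2
  · have hac : a = c := sub_eq_zero.mp h1
    have hb : b = 0 := pow_eq_zero_iff (two_ne_zero (α := ℕ)) |>.mp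
      (by linear_combination hq + (-2*a + 2*b + 3*c)*h1)
    exact Or.inl ⟨hac, hb⟩
  · have h3 : a^2 - 3*a*c + 3*c^2 = 0 := pow_eq_zero_iff (two_ne_zero (α := ℕ)) |>.mp
      (by linear_combination 4*c^2*hq - (c^2 + 2*b*c + a*c - a^2)*h2)
    have hb : b = a := by
      have h4 : (2*c) * (b - a) = 0 := by linear_combination h2 - h3
      rcases mul_eq_zero.mp h4 with h | h
      · exact absurd h (mul_ne_zero two_ne_zero hc0)
      · linear_combination h
    have hsplit : (2*a - (3+j)*c) * (2*a - (3-j)*c) = 0 := by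
      linear_combination 4*h3 - c^2*hj
    rcases mul_eq_zero.mp hsplit with h | h
    · exact Or.inr (Or.inl ⟨hb, by linear_combination h⟩)
    · exact Or.inr (Or.inr ⟨hb, by linear_combination h⟩)

lemma solveB (j a b c : ℂ) (hj : j^2 = -3)
    (h0 : ¬(a = 0 ∧ b = 0 ∧ c = 0))
    (hq : b^2 + 2*a^2 - 2*a*b - 5*a*c + 2*b*c + 3*c^2 = 0)
    (hc : 2*b^2*c - a*b^2 + 4*a^2*c - 12*a*c^2 + 9*c^3 = 0) :
    c ≠ 0 ∧ ((2*a = 3*c ∧ b = 0) ∨ (b = a ∧ 2*a = (3+j)*c) ∨ (b = a ∧ 2*a = (3-j)*c)) := by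
  have hc0 : c ≠ 0 := by
    intro h
    subst h
    have hab : a * b^2 = 0 := by linear_combination -hc
    rcases mul_eq_zero.mp hab with ha | hb2
    · subst ha
      have hb : b = 0 := pow_eq_zero_iff (two_ne_zero (α := ℕ)) |>.mp (by linear_combination hq)
      exact h0 ⟨rfl, hb, rfl⟩
    · have hb : b = 0 := pow_eq_zero_iff (two_ne_zero (α := ℕ)) |>.mp hb2
      subst hb
      have ha : a = 0 := pow_eq_zero_iff (two_ne_zero (α := ℕ)) |>.mp (by linear_combination hq/2)
      exact h0 ⟨ha, rfl, rfl⟩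
  refine ⟨hc0, ?_⟩
  have hE : b*(2*(a-c)*(a-2*c)) = (2*a-3*c)*(a^2-a*c-c^2) := by
    linear_combination (2*c-a)*hq - hc
  have hT : (2*a-3*c) * (a^2-3*a*c+3*c^2) = 0 := by
    refine pow_eq_zero_iff (two_ne_zero (α := ℕ)) |>.mp ?_
    linear_combination (2*(a-c)*(a-2*c))^2*hq -
      (b*(2*(a-c)*(a-2*c)) + (2*a-3*c)*(a^2-a*c-c^2) + (2*c-2*a)*(2*(a-c)*(a-2*c)))*hE
  rcases mul_eq_zero.mp hT with h30 | h3
  · have hbL : b*(2*(a-c)*(a-2*c)) = 0 := by linear_combination hE + (a^2-a*c-c^2)*h30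
    have hbc : b * c^2 = 0 := by linear_combination (-2)*hbL + b*(2*a-3*c)*h30
    have hb : b = 0 := (mul_eq_zero.mp hbc).resolve_right (pow_ne_zero 2 hc0)
    exact Or.inl ⟨by linear_combination h30, hb⟩
  · have hba : (b - a) * (-2*c^2) = 0 := by
      linear_combination (hE + c*h3) - (b-a)*2*h3
    have hb : b = a := by
      rcases mul_eq_zero.mp hba with h | h
      · linear_combination h
      · exact absurd (by linear_combination -h/2 : c^2 = 0) (pow_ne_zero 2 hc0)
    have hsplit : (2*a - (3+j)*c) * (2*a - (3-j)*c) = 0 := by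
      linear_combination 4*h3 - c^2*hj
    rcases mul_eq_zero.mp hsplit with h | h
    · exact Or.inr (Or.inl ⟨hb, by linear_combination h⟩)
    · exact Or.inr (Or.inr ⟨hb, by linear_combination h⟩)


lemma memA : ∀ w ∈ [P1, P2, P3], eval w Q1 = 0 ∧ eval w C1 = 0 := by
  intro w hw
  simp only [List.mem_cons, List.not_mem_nil, or_false] at hw
  rcases hw with rfl | rfl | rfl
  · exact ⟨by rw [evalQ1]; simp only [P1_0, P1_1, P1_2]; norm_num, by rw [evalC1]; simp only [P1_0, P1_1, P1_2]; norm_num⟩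
  · exact ⟨by rw [evalQ1]; simp only [P2_0, P2_1, P2_2]; linear_combination (1)*hs3, by rw [evalC1]; simp only [P2_0, P2_1, P2_2]; linear_combination (3+s3)*hs3⟩
  · exact ⟨by rw [evalQ1]; simp only [P3_0, P3_1, P3_2]; linear_combination (1)*hs3, by rw [evalC1]; simp only [P3_0, P3_1, P3_2]; linear_combination (3-s3)*hs3⟩


lemma memB : ∀ w ∈ [P, P2, P3], eval w Q1 = 0 ∧ eval w C2 = 0 := by
  intro w hw
  simp only [List.mem_cons, List.not_mem_nil, or_false] at hw
  rcases hw with rfl | rfl | rfl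
  · exact ⟨by rw [evalQ1]; simp only [P_0, P_1, P_2]; norm_num, by rw [evalC2]; simp only [P_0, P_1, P_2]; norm_num⟩
  · exact ⟨by rw [evalQ1]; simp only [P2_0, P2_1, P2_2]; linear_combination (1)*hs3, by rw [evalC2]; simp only [P2_0, P2_1, P2_2]; linear_combination (3-s3)*hs3⟩
  · exact ⟨by rw [evalQ1]; simp only [P3_0, P3_1, P3_2]; linear_combination (1)*hs3, by rw [evalC2]; simp only [P3_0, P3_1, P3_2]; linear_combination (3+s3)*hs3⟩


lemma memC : ∀ w ∈ [P1, P4, P5], eval w Q2 = 0 ∧ eval w C1 = 0 := by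
  intro w hw
  simp only [List.mem_cons, List.not_mem_nil, or_false] at hw
  rcases hw with rfl | rfl | rfl
  · exact ⟨by rw [evalQ2]; simp only [P1_0, P1_1, P1_2]; norm_num, by rw [evalC1]; simp only [P1_0, P1_1, P1_2]; norm_num⟩
  · exact ⟨by rw [evalQ2]; simp only [P4_0, P4_1, P4_2]; linear_combination (1)*hs3, by rw [evalC1]; simp only [P4_0, P4_1, P4_2]; linear_combination (3+s3)*hs3⟩
  · exact ⟨by rw [evalQ2]; simp only [P5_0, P5_1, P5_2]; linear_combination (1)*hs3, by rw [evalC1]; simp only [P5_0, P5_1, P5_2]; linear_combination (3-s3)*hs3⟩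


lemma memD : ∀ w ∈ [P, P4, P5], eval w Q2 = 0 ∧ eval w C2 = 0 := by
  intro w hw
  simp only [List.mem_cons, List.not_mem_nil, or_false] at hw
  rcases hw with rfl | rfl | rfl
  · exact ⟨by rw [evalQ2]; simp only [P_0, P_1, P_2]; norm_num, by rw [evalC2]; simp only [P_0, P_1, P_2]; norm_num⟩
  · exact ⟨by rw [evalQ2]; simp only [P4_0, P4_1, P4_2]; linear_combination (1)*hs3, by rw [evalC2]; simp only [P4_0, P4_1, P4_2]; linear_combination (3-s3)*hs3⟩
  · exact ⟨by rw [evalQ2]; simp only [P5_0, P5_1, P5_2]; linear_combination (1)*hs3, by rw [evalC2]; simp only [P5_0, P5_1, P5_2]; linear_combination (3+s3)*hs3⟩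


lemma backA : ∀ v : Fin 3 → ℂ, v ≠ 0 → eval v Q1 = 0 → eval v C1 = 0 →
    ∃ t : ℂ, t ≠ 0 ∧ ∃ w ∈ [P1, P2, P3], v = t • w := by
  intro v hv hQ hC
  rw [evalQ1] at hQ
  rw [evalC1] at hC
  have h0 : ¬(v 0 = 0 ∧ v 1 = 0 ∧ v 2 = 0) := by
    rintro ⟨ha, hb, hcc⟩
    exact hv (vec3_ext (by simpa using ha) (by simpa using hb) (by simpa using hcc))
  obtain ⟨hc0, hcase⟩ := solveA s3 (v 0) (v 1) (v 2) hs3 h0 (by linear_combination hQ) (by linear_combination hC)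
  rcases hcase with ⟨hac, hb⟩ | ⟨hb, h2a⟩ | ⟨hb, h2a⟩
  · refine ⟨v 2, hc0, P1, by simp, vec3_ext ?_ ?_ ?_⟩
    · simp only [Pi.smul_apply, P1_0, smul_eq_mul]; linear_combination hac
    · simp only [Pi.smul_apply, P1_1, smul_eq_mul]; linear_combination hb
    · simp only [Pi.smul_apply, P1_2, smul_eq_mul]; ring
  · refine ⟨v 2 / 2, (div_ne_zero hc0 two_ne_zero), P2, by simp, vec3_ext ?_ ?_ ?_⟩
    · simp only [Pi.smul_apply, P2_0, smul_eq_mul]; linear_combination h2a/2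
    · simp only [Pi.smul_apply, P2_1, smul_eq_mul]; linear_combination hb + h2a/2
    · simp only [Pi.smul_apply, P2_2, smul_eq_mul]; ring
  · refine ⟨v 2 / 2, (div_ne_zero hc0 two_ne_zero), P3, by simp, vec3_ext ?_ ?_ ?_⟩
    · simp only [Pi.smul_apply, P3_0, smul_eq_mul]; linear_combination h2a/2
    · simp only [Pi.smul_apply, P3_1, smul_eq_mul]; linear_combination hb + h2a/2
    · simp only [Pi.smul_apply, P3_2, smul_eq_mul]; ring


lemma backB : ∀ v : Fin 3 → ℂ, v ≠ 0 → eval v Q1 = 0 → eval v C2 = 0 →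
    ∃ t : ℂ, t ≠ 0 ∧ ∃ w ∈ [P, P2, P3], v = t • w := by
  intro v hv hQ hC
  rw [evalQ1] at hQ
  rw [evalC2] at hC
  have h0 : ¬(v 0 = 0 ∧ v 1 = 0 ∧ v 2 = 0) := by
    rintro ⟨ha, hb, hcc⟩
    exact hv (vec3_ext (by simpa using ha) (by simpa using hb) (by simpa using hcc))
  obtain ⟨hc0, hcase⟩ := solveB s3 (v 0) (v 1) (v 2) hs3 h0 (by linear_combination hQ) (by linear_combination hC)
  rcases hcase with ⟨hac, hb⟩ | ⟨hb, h2a⟩ | ⟨hb, h2a⟩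
  · refine ⟨v 2 / 2, (div_ne_zero hc0 two_ne_zero), P, by simp, vec3_ext ?_ ?_ ?_⟩
    · simp only [Pi.smul_apply, P_0, smul_eq_mul]; linear_combination hac/2
    · simp only [Pi.smul_apply, P_1, smul_eq_mul]; linear_combination hb
    · simp only [Pi.smul_apply, P_2, smul_eq_mul]; ring
  · refine ⟨v 2 / 2, (div_ne_zero hc0 two_ne_zero), P2, by simp, vec3_ext ?_ ?_ ?_⟩
    · simp only [Pi.smul_apply, P2_0, smul_eq_mul]; linear_combination h2a/2
    · simp only [Pi.smul_apply, P2_1, smul_eq_mul]; linear_combination hb + h2a/2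
    · simp only [Pi.smul_apply, P2_2, smul_eq_mul]; ring
  · refine ⟨v 2 / 2, (div_ne_zero hc0 two_ne_zero), P3, by simp, vec3_ext ?_ ?_ ?_⟩
    · simp only [Pi.smul_apply, P3_0, smul_eq_mul]; linear_combination h2a/2
    · simp only [Pi.smul_apply, P3_1, smul_eq_mul]; linear_combination hb + h2a/2
    · simp only [Pi.smul_apply, P3_2, smul_eq_mul]; ring


lemma backC : ∀ v : Fin 3 → ℂ, v ≠ 0 → eval v Q2 = 0 → eval v C1 = 0 →
    ∃ t : ℂ, t ≠ 0 ∧ ∃ w ∈ [P1, P4, P5], v = t • w := by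
  intro v hv hQ hC
  rw [evalQ2] at hQ
  rw [evalC1] at hC
  have h0 : ¬(v 0 = 0 ∧ -(v 1) = 0 ∧ v 2 = 0) := by
    rintro ⟨ha, hb, hcc⟩
    exact hv (vec3_ext (by simpa using ha) (by simpa using hb) (by simpa using hcc))
  obtain ⟨hc0, hcase⟩ := solveA s3 (v 0) (-(v 1)) (v 2) hs3 h0 (by linear_combination hQ) (by linear_combination hC)
  rcases hcase with ⟨hac, hb⟩ | ⟨hb, h2a⟩ | ⟨hb, h2a⟩
  · refine ⟨v 2, hc0, P1, by simp, vec3_ext ?_ ?_ ?_⟩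
    · simp only [Pi.smul_apply, P1_0, smul_eq_mul]; linear_combination hac
    · simp only [Pi.smul_apply, P1_1, smul_eq_mul]; linear_combination -hb
    · simp only [Pi.smul_apply, P1_2, smul_eq_mul]; ring
  · refine ⟨v 2 / 2, (div_ne_zero hc0 two_ne_zero), P4, by simp, vec3_ext ?_ ?_ ?_⟩
    · simp only [Pi.smul_apply, P4_0, smul_eq_mul]; linear_combination h2a/2
    · simp only [Pi.smul_apply, P4_1, smul_eq_mul]; linear_combination -hb - h2a/2
    · simp only [Pi.smul_apply, P4_2, smul_eq_mul]; ring
  · refine ⟨v 2 / 2, (div_ne_zero hc0 two_ne_zero), P5, by simp, vec3_ext ?_ ?_ ?_⟩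
    · simp only [Pi.smul_apply, P5_0, smul_eq_mul]; linear_combination h2a/2
    · simp only [Pi.smul_apply, P5_1, smul_eq_mul]; linear_combination -hb - h2a/2
    · simp only [Pi.smul_apply, P5_2, smul_eq_mul]; ring


lemma backD : ∀ v : Fin 3 → ℂ, v ≠ 0 → eval v Q2 = 0 → eval v C2 = 0 →
    ∃ t : ℂ, t ≠ 0 ∧ ∃ w ∈ [P, P4, P5], v = t • w := by
  intro v hv hQ hC
  rw [evalQ2] at hQ
  rw [evalC2] at hC
  have h0 : ¬(v 0 = 0 ∧ -(v 1) = 0 ∧ v 2 = 0) := by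
    rintro ⟨ha, hb, hcc⟩
    exact hv (vec3_ext (by simpa using ha) (by simpa using hb) (by simpa using hcc))
  obtain ⟨hc0, hcase⟩ := solveB s3 (v 0) (-(v 1)) (v 2) hs3 h0 (by linear_combination hQ) (by linear_combination hC)
  rcases hcase with ⟨hac, hb⟩ | ⟨hb, h2a⟩ | ⟨hb, h2a⟩
  · refine ⟨v 2 / 2, (div_ne_zero hc0 two_ne_zero), P, by simp, vec3_ext ?_ ?_ ?_⟩
    · simp only [Pi.smul_apply, P_0, smul_eq_mul]; linear_combination hac/2
    · simp only [Pi.smul_apply, P_1, smul_eq_mul]; linear_combination -hb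
    · simp only [Pi.smul_apply, P_2, smul_eq_mul]; ring
  · refine ⟨v 2 / 2, (div_ne_zero hc0 two_ne_zero), P4, by simp, vec3_ext ?_ ?_ ?_⟩
    · simp only [Pi.smul_apply, P4_0, smul_eq_mul]; linear_combination h2a/2
    · simp only [Pi.smul_apply, P4_1, smul_eq_mul]; linear_combination -hb - h2a/2
    · simp only [Pi.smul_apply, P4_2, smul_eq_mul]; ring
  · refine ⟨v 2 / 2, (div_ne_zero hc0 two_ne_zero), P5, by simp, vec3_ext ?_ ?_ ?_⟩
    · simp only [Pi.smul_apply, P5_0, smul_eq_mul]; linear_combination h2a/2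
    · simp only [Pi.smul_apply, P5_1, smul_eq_mul]; linear_combination -hb - h2a/2
    · simp only [Pi.smul_apply, P5_2, smul_eq_mul]; ring


lemma tQ1C1P1 : TangentAt Q1 C1 P1 := by
  refine ⟨ne_zero_of_comp 0 (-1) (0) ?_ (by norm_num),
    ne_zero_of_comp 0 (-2) (0) ?_ (by norm_num),
    2, two_ne_zero, vec3_ext ?_ ?_ ?_⟩
  · rw [gradQ1_0]; simp only [P1_0, P1_1, P1_2]; ring
  · rw [gradC1_0]; simp only [P1_0, P1_1, P1_2]; ring
  · rw [Pi.smul_apply, smul_eq_mul, gradC1_0, gradQ1_0]; simp only [P1_0, P1_1, P1_2]; ring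
  · rw [Pi.smul_apply, smul_eq_mul, gradC1_1, gradQ1_1]; simp only [P1_0, P1_1, P1_2]; ring
  · rw [Pi.smul_apply, smul_eq_mul, gradC1_2, gradQ1_2]; simp only [P1_0, P1_1, P1_2]; ring


lemma tQ1C1P2 : TangentAt Q1 C1 P2 := by
  refine ⟨ne_zero_of_comp 1 (4) (0) ?_ (by norm_num),
    ne_zero_of_comp 1 (12) (4) ?_ (by norm_num),
    3+1*s3, lin_ne 3 1 (by norm_num), vec3_ext ?_ ?_ ?_⟩
  · rw [gradQ1_1]; simp only [P2_0, P2_1, P2_2]; ring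
  · rw [gradC1_1]; simp only [P2_0, P2_1, P2_2]; ring
  · rw [Pi.smul_apply, smul_eq_mul, gradC1_0, gradQ1_0]; simp only [P2_0, P2_1, P2_2]; linear_combination (1)*hs3
  · rw [Pi.smul_apply, smul_eq_mul, gradC1_1, gradQ1_1]; simp only [P2_0, P2_1, P2_2]; ring
  · rw [Pi.smul_apply, smul_eq_mul, gradC1_2, gradQ1_2]; simp only [P2_0, P2_1, P2_2]; ring


lemma tQ1C1P3 : TangentAt Q1 C1 P3 := by
  refine ⟨ne_zero_of_comp 1 (4) (0) ?_ (by norm_num),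
    ne_zero_of_comp 1 (12) (-4) ?_ (by norm_num),
    3+(-1)*s3, lin_ne 3 (-1) (by norm_num), vec3_ext ?_ ?_ ?_⟩
  · rw [gradQ1_1]; simp only [P3_0, P3_1, P3_2]; ring
  · rw [gradC1_1]; simp only [P3_0, P3_1, P3_2]; ring
  · rw [Pi.smul_apply, smul_eq_mul, gradC1_0, gradQ1_0]; simp only [P3_0, P3_1, P3_2]; linear_combination (1)*hs3
  · rw [Pi.smul_apply, smul_eq_mul, gradC1_1, gradQ1_1]; simp only [P3_0, P3_1, P3_2]; ring
  · rw [Pi.smul_apply, smul_eq_mul, gradC1_2, gradQ1_2]; simp only [P3_0, P3_1, P3_2]; ring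


lemma tQ1C2P2 : TangentAt Q1 C2 P2 := by
  refine ⟨ne_zero_of_comp 1 (4) (0) ?_ (by norm_num),
    ne_zero_of_comp 1 (12) (-4) ?_ (by norm_num),
    3+(-1)*s3, lin_ne 3 (-1) (by norm_num), vec3_ext ?_ ?_ ?_⟩
  · rw [gradQ1_1]; simp only [P2_0, P2_1, P2_2]; ring
  · rw [gradC2_1]; simp only [P2_0, P2_1, P2_2]; linear_combination (-2)*hs3
  · rw [Pi.smul_apply, smul_eq_mul, gradC2_0, gradQ1_0]; simp only [P2_0, P2_1, P2_2]; linear_combination (1)*hs3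
  · rw [Pi.smul_apply, smul_eq_mul, gradC2_1, gradQ1_1]; simp only [P2_0, P2_1, P2_2]; linear_combination (-2)*hs3
  · rw [Pi.smul_apply, smul_eq_mul, gradC2_2, gradQ1_2]; simp only [P2_0, P2_1, P2_2]; linear_combination (3)*hs3


lemma tQ1C2P3 : TangentAt Q1 C2 P3 := by
  refine ⟨ne_zero_of_comp 1 (4) (0) ?_ (by norm_num),
    ne_zero_of_comp 1 (12) (4) ?_ (by norm_num),
    3+1*s3, lin_ne 3 1 (by norm_num), vec3_ext ?_ ?_ ?_⟩
  · rw [gradQ1_1]; simp only [P3_0, P3_1, P3_2]; ring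
  · rw [gradC2_1]; simp only [P3_0, P3_1, P3_2]; linear_combination (-2)*hs3
  · rw [Pi.smul_apply, smul_eq_mul, gradC2_0, gradQ1_0]; simp only [P3_0, P3_1, P3_2]; linear_combination (1)*hs3
  · rw [Pi.smul_apply, smul_eq_mul, gradC2_1, gradQ1_1]; simp only [P3_0, P3_1, P3_2]; linear_combination (-2)*hs3
  · rw [Pi.smul_apply, smul_eq_mul, gradC2_2, gradQ1_2]; simp only [P3_0, P3_1, P3_2]; linear_combination (3)*hs3


lemma tQ2C1P1 : TangentAt Q2 C1 P1 := by
  refine ⟨ne_zero_of_comp 0 (-1) (0) ?_ (by norm_num),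
    ne_zero_of_comp 0 (-2) (0) ?_ (by norm_num),
    2, two_ne_zero, vec3_ext ?_ ?_ ?_⟩
  · rw [gradQ2_0]; simp only [P1_0, P1_1, P1_2]; ring
  · rw [gradC1_0]; simp only [P1_0, P1_1, P1_2]; ring
  · rw [Pi.smul_apply, smul_eq_mul, gradC1_0, gradQ2_0]; simp only [P1_0, P1_1, P1_2]; ring
  · rw [Pi.smul_apply, smul_eq_mul, gradC1_1, gradQ2_1]; simp only [P1_0, P1_1, P1_2]; ring
  · rw [Pi.smul_apply, smul_eq_mul, gradC1_2, gradQ2_2]; simp only [P1_0, P1_1, P1_2]; ring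


lemma tQ2C1P4 : TangentAt Q2 C1 P4 := by
  refine ⟨ne_zero_of_comp 1 (-4) (0) ?_ (by norm_num),
    ne_zero_of_comp 1 (-12) (-4) ?_ (by norm_num),
    3+1*s3, lin_ne 3 1 (by norm_num), vec3_ext ?_ ?_ ?_⟩
  · rw [gradQ2_1]; simp only [P4_0, P4_1, P4_2]; ring
  · rw [gradC1_1]; simp only [P4_0, P4_1, P4_2]; ring
  · rw [Pi.smul_apply, smul_eq_mul, gradC1_0, gradQ2_0]; simp only [P4_0, P4_1, P4_2]; linear_combination (1)*hs3
  · rw [Pi.smul_apply, smul_eq_mul, gradC1_1, gradQ2_1]; simp only [P4_0, P4_1, P4_2]; ring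
  · rw [Pi.smul_apply, smul_eq_mul, gradC1_2, gradQ2_2]; simp only [P4_0, P4_1, P4_2]; ring


lemma tQ2C1P5 : TangentAt Q2 C1 P5 := by
  refine ⟨ne_zero_of_comp 1 (-4) (0) ?_ (by norm_num),
    ne_zero_of_comp 1 (-12) (4) ?_ (by norm_num),
    3+(-1)*s3, lin_ne 3 (-1) (by norm_num), vec3_ext ?_ ?_ ?_⟩
  · rw [gradQ2_1]; simp only [P5_0, P5_1, P5_2]; ring
  · rw [gradC1_1]; simp only [P5_0, P5_1, P5_2]; ring
  · rw [Pi.smul_apply, smul_eq_mul, gradC1_0, gradQ2_0]; simp only [P5_0, P5_1, P5_2]; linear_combination (1)*hs3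
  · rw [Pi.smul_apply, smul_eq_mul, gradC1_1, gradQ2_1]; simp only [P5_0, P5_1, P5_2]; ring
  · rw [Pi.smul_apply, smul_eq_mul, gradC1_2, gradQ2_2]; simp only [P5_0, P5_1, P5_2]; ring


lemma tQ2C2P4 : TangentAt Q2 C2 P4 := by
  refine ⟨ne_zero_of_comp 1 (-4) (0) ?_ (by norm_num),
    ne_zero_of_comp 1 (-12) (4) ?_ (by norm_num),
    3+(-1)*s3, lin_ne 3 (-1) (by norm_num), vec3_ext ?_ ?_ ?_⟩
  · rw [gradQ2_1]; simp only [P4_0, P4_1, P4_2]; ring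
  · rw [gradC2_1]; simp only [P4_0, P4_1, P4_2]; linear_combination (2)*hs3
  · rw [Pi.smul_apply, smul_eq_mul, gradC2_0, gradQ2_0]; simp only [P4_0, P4_1, P4_2]; linear_combination (1)*hs3
  · rw [Pi.smul_apply, smul_eq_mul, gradC2_1, gradQ2_1]; simp only [P4_0, P4_1, P4_2]; linear_combination (2)*hs3
  · rw [Pi.smul_apply, smul_eq_mul, gradC2_2, gradQ2_2]; simp only [P4_0, P4_1, P4_2]; linear_combination (3)*hs3


lemma tQ2C2P5 : TangentAt Q2 C2 P5 := by
  refine ⟨ne_zero_of_comp 1 (-4) (0) ?_ (by norm_num),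
    ne_zero_of_comp 1 (-12) (-4) ?_ (by norm_num),
    3+1*s3, lin_ne 3 1 (by norm_num), vec3_ext ?_ ?_ ?_⟩
  · rw [gradQ2_1]; simp only [P5_0, P5_1, P5_2]; ring
  · rw [gradC2_1]; simp only [P5_0, P5_1, P5_2]; linear_combination (2)*hs3
  · rw [Pi.smul_apply, smul_eq_mul, gradC2_0, gradQ2_0]; simp only [P5_0, P5_1, P5_2]; linear_combination (1)*hs3
  · rw [Pi.smul_apply, smul_eq_mul, gradC2_1, gradQ2_1]; simp only [P5_0, P5_1, P5_2]; linear_combination (2)*hs3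
  · rw [Pi.smul_apply, smul_eq_mul, gradC2_2, gradQ2_2]; simp only [P5_0, P5_1, P5_2]; linear_combination (3)*hs3


lemma gradC2P : grad C2 P = 0 := by
  refine vec3_ext ?_ ?_ ?_ <;> simp only [Pi.zero_apply]
  · rw [gradC2_0]; simp only [P_0, P_1, P_2]; norm_num
  · rw [gradC2_1]; simp only [P_0, P_1, P_2]; norm_num
  · rw [gradC2_2]; simp only [P_0, P_1, P_2]; norm_num


/-- the Oort–Peters conic–cubic intersections:
(a) `Q1·C1 = 2(P1+P2+P3)`, (b) `Q1·C2 = 2(P+P2+P3)` (with `C2` singular at `P`),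
(c) `Q2·C1 = 2(P1+P4+P5)`, (d) `Q2·C2 = 2(P4+P5+P)` (with `C2` singular at `P`). -/
theorem OP_conic_cubic_intersections :
    (CommonZerosExactly Q1 C1 [P1, P2, P3] ∧
      TangentAt Q1 C1 P1 ∧ TangentAt Q1 C1 P2 ∧ TangentAt Q1 C1 P3) ∧
    (CommonZerosExactly Q1 C2 [P, P2, P3] ∧
      TangentAt Q1 C2 P2 ∧ TangentAt Q1 C2 P3 ∧ grad C2 P = 0) ∧
    (CommonZerosExactly Q2 C1 [P1, P4, P5] ∧
      TangentAt Q2 C1 P1 ∧ TangentAt Q2 C1 P4 ∧ TangentAt Q2 C1 P5) ∧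
    (CommonZerosExactly Q2 C2 [P, P4, P5] ∧
      TangentAt Q2 C2 P4 ∧ TangentAt Q2 C2 P5 ∧ grad C2 P = 0) := by
  exact ⟨⟨⟨memA, backA⟩, tQ1C1P1, tQ1C1P2, tQ1C1P3⟩,
    ⟨⟨memB, backB⟩, tQ1C2P2, tQ1C2P3, gradC2P⟩,
    ⟨⟨memC, backC⟩, tQ2C1P1, tQ2C1P4, tQ2C1P5⟩,
    ⟨⟨memD, backD⟩, tQ2C2P4, tQ2C2P5, gradC2P⟩⟩
end
end

section
/- (Oort–Peters intersection C1·C2 = 2(P2+P3+P4+P5) + ∞.) The set of common zeros of C1 and C2 in ℙ²(ℂ) is exactly {P2, P3, P4, P5, ∞}. At each of P2, P3, P4, P5 the gradient vectors of C1 and C2 are both nonzero and proportional (the two cubics are tangent there), while at ∞ = [0:1:0] the gradients ∇C1(0,1,0) and ∇C2(0,1,0) are not proportional (the cubics meet transversally at ∞). -/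
noncomputable section

open MvPolynomial

/- ### Auxiliary lemmas -/

lemma s3_sq : s3 ^ 2 = -3 := by
  have h : (Real.sqrt 3 : ℂ)^2 = 3 := by
    rw [← Complex.ofReal_pow, Real.sq_sqrt (by norm_num)]; norm_num
  rw [s3, mul_pow, Complex.I_sq, h]; ring

lemma s3_ne (r : ℂ) (h : r^2 ≠ -3) : s3 ≠ r := fun he => h (he ▸ s3_sq)

lemma gradC1 (v : Fin 3 → ℂ) : grad C1 v =
    ![3*(v 0)^2 - 8*(v 0)*(v 2) + 3*(v 2)^2, 2*(v 1)*(v 2),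
      (v 1)^2 - 4*(v 0)^2 + 6*(v 0)*(v 2)] := by
  funext i; fin_cases i <;>
    simp [grad, C1, x, y, z, ← map_ofNat (C : ℂ →+* R3)] <;> ring

lemma gradC2 (v : Fin 3 → ℂ) : grad C2 v =
    ![-(v 1)^2 + 8*(v 0)*(v 2) - 12*(v 2)^2, 4*(v 1)*(v 2) - 2*(v 0)*(v 1),
      2*(v 1)^2 + 4*(v 0)^2 - 24*(v 0)*(v 2) + 27*(v 2)^2] := by
  funext i; fin_cases i <;>
    simp [grad, C2, x, y, z, ← map_ofNat (C : ℂ →+* R3)] <;> ring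

lemma tangent_of {G H : R3} {v : Fin 3 → ℂ} (t : ℂ) (ht : t ≠ 0)
    (hg : grad G v ≠ 0) (h : grad H v = t • grad G v) : TangentAt G H v :=
  ⟨hg, by rw [h]; exact smul_ne_zero ht hg, t, ht, h⟩

/-- `C1·C2 = 2(P2+P3+P4+P5) + ∞`: the cubics meet exactly at
`P2, P3, P4, P5, ∞`; they are tangent at `P2, P3, P4, P5` and transversal at `∞`. -/
theorem OP_cubics_intersection :
    CommonZerosExactly C1 C2 [P2, P3, P4, P5, Pinf] ∧
    TangentAt C1 C2 P2 ∧ TangentAt C1 C2 P3 ∧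
    TangentAt C1 C2 P4 ∧ TangentAt C1 C2 P5 ∧
    LinearIndependent ℂ ![grad C1 Pinf, grad C2 Pinf] := by
  refine ⟨⟨?_, ?_⟩, ?_, ?_, ?_, ?_, ?_⟩
  · -- all listed points are common zeros
    intro w hw
    simp only [List.mem_cons, List.not_mem_nil, or_false] at hw
    rcases hw with rfl | rfl | rfl | rfl | rfl
    · refine ⟨?_, ?_⟩
      · rw [evalC1]; simp [P2]; linear_combination (3+s3)*s3_sq
      · rw [evalC2]; simp [P2]; linear_combination (3-s3)*s3_sq
    · refine ⟨?_, ?_⟩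
      · rw [evalC1]; simp [P3]; linear_combination (3-s3)*s3_sq
      · rw [evalC2]; simp [P3]; linear_combination (3+s3)*s3_sq
    · refine ⟨?_, ?_⟩
      · rw [evalC1]; simp [P4]; linear_combination (3+s3)*s3_sq
      · rw [evalC2]; simp [P4]; linear_combination (3-s3)*s3_sq
    · refine ⟨?_, ?_⟩
      · rw [evalC1]; simp [P5]; linear_combination (3-s3)*s3_sq
      · rw [evalC2]; simp [P5]; linear_combination (3+s3)*s3_sq
    · refine ⟨?_, ?_⟩ <;> [rw [evalC1]; rw [evalC2]] <;> simp [Pinf]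
  · -- every common zero is (projectively) one of the listed points
    intro v hv h1 h2
    rw [evalC1] at h1
    rw [evalC2] at h2
    by_cases hc : v 2 = 0
    · have ha : v 0 = 0 := by
        have h3 : (v 0)^3 = 0 := by
          rw [hc] at h1; linear_combination h1
        exact (pow_eq_zero_iff (by norm_num : (3:ℕ) ≠ 0)).mp h3
      have hb : v 1 ≠ 0 := by
        intro hb
        apply hv
        funext i; fin_cases i
        · exact ha
        · exact hb
        · exact hc
      refine ⟨v 1, hb, Pinf, by simp, ?_⟩
      funext i; fin_cases i <;> simp [Pinf, ha, hc]
    · have key : ((v 0)^2 - 3*(v 0)*(v 2) + 3*(v 2)^2)^2 = 0 := by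
        linear_combination (v 2)*h2 - (2*(v 2) - v 0)*h1
      have hq : (v 0)^2 - 3*(v 0)*(v 2) + 3*(v 2)^2 = 0 :=
        (pow_eq_zero_iff (by norm_num : (2:ℕ) ≠ 0)).mp key
      have hb2 : (v 1 - v 0)*(v 1 + v 0) = 0 :=
        mul_right_cancel₀ hc (by linear_combination h1 - (v 0) * hq)
      have hfac : (v 0 - (3+s3)/2*(v 2)) * (v 0 - (3-s3)/2*(v 2)) = 0 := by
        linear_combination hq - ((v 2)^2/4)*s3_sq
      have ht : v 2 / 2 ≠ 0 := div_ne_zero hc two_ne_zero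
      rcases mul_eq_zero.mp hfac with ha | ha <;> rcases mul_eq_zero.mp hb2 with hb | hb
      · refine ⟨v 2 / 2, ht, P2, by simp, ?_⟩
        funext i; fin_cases i <;> simp [P2]
        · linear_combination ha
        · linear_combination hb + ha
      · refine ⟨v 2 / 2, ht, P4, by simp, ?_⟩
        funext i; fin_cases i <;> simp [P4]
        · linear_combination ha
        · linear_combination hb - ha
      · refine ⟨v 2 / 2, ht, P3, by simp, ?_⟩
        funext i; fin_cases i <;> simp [P3]
        · linear_combination ha
        · linear_combination hb + ha
      · refine ⟨v 2 / 2, ht, P5, by simp, ?_⟩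
        funext i; fin_cases i <;> simp [P5]
        · linear_combination ha
        · linear_combination hb - ha
  · -- tangent at P2
    refine tangent_of ((1-s3)/2) ?_ ?_ ?_
    · intro h
      exact s3_ne 1 (by norm_num) (by linear_combination (-2)*h)
    · intro h0
      have h1 := congrFun h0 1
      simp [gradC1, P2] at h1
      exact s3_ne (-3) (by norm_num) (by linear_combination h1)
    · funext i
      fin_cases i
      · simp [gradC1, gradC2, P2]; linear_combination (-3/2 + 3/2*s3)*s3_sq
      · simp [gradC1, gradC2, P2]; linear_combination 0*s3_sq
      · simp [gradC1, gradC2, P2]; linear_combination (9/2 - 3/2*s3)*s3_sq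
  · -- tangent at P3
    refine tangent_of ((1+s3)/2) ?_ ?_ ?_
    · intro h
      exact s3_ne (-1) (by norm_num) (by linear_combination 2*h)
    · intro h0
      have h1 := congrFun h0 1
      simp [gradC1, P3] at h1
      exact s3_ne 3 (by norm_num) (by linear_combination -h1)
    · funext i
      fin_cases i
      · simp [gradC1, gradC2, P3]; linear_combination (-3/2 - 3/2*s3)*s3_sq
      · simp [gradC1, gradC2, P3]; linear_combination 0*s3_sq
      · simp [gradC1, gradC2, P3]; linear_combination (9/2 + 3/2*s3)*s3_sq
  · -- tangent at P4
    refine tangent_of ((1-s3)/2) ?_ ?_ ?_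
    · intro h
      exact s3_ne 1 (by norm_num) (by linear_combination (-2)*h)
    · intro h0
      have h1 := congrFun h0 1
      simp [gradC1, P4] at h1
      exact s3_ne (-3) (by norm_num) (by linear_combination -h1)
    · funext i
      fin_cases i
      · simp [gradC1, gradC2, P4]; linear_combination (-3/2 + 3/2*s3)*s3_sq
      · simp [gradC1, gradC2, P4]; linear_combination 0*s3_sq
      · simp [gradC1, gradC2, P4]; linear_combination (9/2 - 3/2*s3)*s3_sq
  · -- tangent at P5
    refine tangent_of ((1+s3)/2) ?_ ?_ ?_
    · intro h
      exact s3_ne (-1) (by norm_num) (by linear_combination 2*h)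
    · intro h0
      have h1 := congrFun h0 1
      simp [gradC1, P5] at h1
      exact s3_ne 3 (by norm_num) (by linear_combination h1)
    · funext i
      fin_cases i
      · simp [gradC1, gradC2, P5]; linear_combination (-3/2 - 3/2*s3)*s3_sq
      · simp [gradC1, gradC2, P5]; linear_combination 0*s3_sq
      · simp [gradC1, gradC2, P5]; linear_combination (9/2 + 3/2*s3)*s3_sq
  · -- transversal at ∞
    have hg1 : grad C1 Pinf = ![0, 0, 1] := by
      rw [gradC1]; funext i; fin_cases i <;> simp [Pinf]
    have hg2 : grad C2 Pinf = ![-1, 0, 2] := by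
      rw [gradC2]; funext i; fin_cases i <;> simp [Pinf]
    rw [hg1, hg2, LinearIndependent.pair_iff]
    intro s t h
    have h0 := congrFun h 0
    have h2 := congrFun h 2
    simp at h0 h2
    exact ⟨by linear_combination h2 - 2*h0, h0⟩
end
end
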